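/- Let (u, ρ) be a smooth solution of the periodic two-component μ-Hunter-Saxton system on [0,∞). Then for all t ≥ 0 and all x ∈ ℝ, |u(t,x)| ≤ |μ₀| + (√3/6) μ₁. -/

import Mathlib

open MeasureTheory Real Set Filter Function intervalIntegral

section Aux

lemma hle1' : (1 : WithTop ℕ∞) ≤ ((⊤:ℕ∞) : WithTop ℕ∞) := by
  rw [show ((1:WithTop ℕ∞)) = ((1:ℕ∞):WithTop ℕ∞) from rfl, WithTop.coe_le_coe]; exact le_top

lemma hle2' : (2 : WithTop ℕ∞) ≤ ((⊤:ℕ∞) : WithTop ℕ∞) := by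
  rw [show ((2:WithTop ℕ∞)) = ((2:ℕ∞):WithTop ℕ∞) from rfl, WithTop.coe_le_coe]; exact le_top

lemma hletop' : ((⊤:ℕ∞):WithTop ℕ∞) + 1 ≤ ((⊤:ℕ∞):WithTop ℕ∞) := by
  rw [show ((1:WithTop ℕ∞)) = ((1:ℕ∞):WithTop ℕ∞) from rfl, ← WithTop.coe_add, WithTop.coe_le_coe]
  simp

noncomputable def pd1 (F : ℝ → ℝ → ℝ) (t x : ℝ) : ℝ := deriv (fun s => F s x) t
noncomputable def pd2 (F : ℝ → ℝ → ℝ) (t x : ℝ) : ℝ := deriv (F t) x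

variable {F : ℝ → ℝ → ℝ}

lemma cd_right (hF : ContDiff ℝ (⊤ : ℕ∞) (uncurry F)) (t : ℝ) : ContDiff ℝ (⊤ : ℕ∞) (F t) :=
  hF.comp (contDiff_const.prodMk contDiff_id)

lemma cd_left (hF : ContDiff ℝ (⊤ : ℕ∞) (uncurry F)) (x : ℝ) :
    ContDiff ℝ (⊤ : ℕ∞) (fun s => F s x) :=
  hF.comp (contDiff_id.prodMk contDiff_const)

lemma hasDerivAt_pd2 (hF : ContDiff ℝ (⊤ : ℕ∞) (uncurry F)) (t x : ℝ) :
    HasDerivAt (F t) (pd2 F t x) x :=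
  (((cd_right hF t).differentiable (by simp)) x).hasDerivAt

lemma hasDerivAt_pd1 (hF : ContDiff ℝ (⊤ : ℕ∞) (uncurry F)) (t x : ℝ) :
    HasDerivAt (fun s => F s x) (pd1 F t x) t :=
  (((cd_left hF x).differentiable (by simp)) t).hasDerivAt

lemma pd2_eq_fderiv (hF : ContDiff ℝ (⊤ : ℕ∞) (uncurry F)) (t x : ℝ) :
    pd2 F t x = fderiv ℝ (uncurry F) (t, x) (0, 1) := by
  have h : HasDerivAt (F t) (fderiv ℝ (uncurry F) (t, x) ((0 : ℝ), (1 : ℝ))) x :=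
    ((hF.differentiable (by simp) (t, x)).hasFDerivAt).comp_hasDerivAt x
      ((hasDerivAt_const x t).prodMk (hasDerivAt_id x))
  exact h.deriv.symm ▸ rfl

lemma pd1_eq_fderiv (hF : ContDiff ℝ (⊤ : ℕ∞) (uncurry F)) (t x : ℝ) :
    pd1 F t x = fderiv ℝ (uncurry F) (t, x) (1, 0) := by
  have h : HasDerivAt (fun s => F s x) (fderiv ℝ (uncurry F) (t, x) ((1 : ℝ), (0 : ℝ))) t :=
    by
      have h0 := (hasDerivAt_id t).prodMk (hasDerivAt_const t x)
      have h1 := (hF.differentiable (by simp) (t, x)).hasFDerivAt.comp_hasDerivAt t h0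
      convert h1 using 1 <;> (try rfl) <;> simp
  exact h.deriv.symm ▸ rfl

lemma cd_pd2 (hF : ContDiff ℝ (⊤ : ℕ∞) (uncurry F)) :
    ContDiff ℝ (⊤ : ℕ∞) (uncurry (pd2 F)) := by
  have h1 : ContDiff ℝ (⊤ : ℕ∞) (fderiv ℝ (uncurry F)) := hF.fderiv_right hletop'
  have h2 : ContDiff ℝ (⊤ : ℕ∞) (fun p : ℝ × ℝ => fderiv ℝ (uncurry F) p ((0 : ℝ), (1 : ℝ))) :=
    h1.clm_apply contDiff_const
  have : uncurry (pd2 F) = fun p : ℝ × ℝ => fderiv ℝ (uncurry F) p ((0 : ℝ), (1 : ℝ)) := by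
    funext p
    exact pd2_eq_fderiv hF p.1 p.2
  rw [this]; exact h2

lemma cd_pd1 (hF : ContDiff ℝ (⊤ : ℕ∞) (uncurry F)) :
    ContDiff ℝ (⊤ : ℕ∞) (uncurry (pd1 F)) := by
  have h1 : ContDiff ℝ (⊤ : ℕ∞) (fderiv ℝ (uncurry F)) := hF.fderiv_right hletop'
  have h2 : ContDiff ℝ (⊤ : ℕ∞) (fun p : ℝ × ℝ => fderiv ℝ (uncurry F) p ((1 : ℝ), (0 : ℝ))) :=
    h1.clm_apply contDiff_const
  have : uncurry (pd1 F) = fun p : ℝ × ℝ => fderiv ℝ (uncurry F) p ((1 : ℝ), (0 : ℝ)) := by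
    funext p
    exact pd1_eq_fderiv hF p.1 p.2
  rw [this]; exact h2

lemma clairaut (hF : ContDiff ℝ (⊤ : ℕ∞) (uncurry F)) (t x : ℝ) :
    pd1 (pd2 F) t x = pd2 (pd1 F) t x := by
  have h1 : ContDiff ℝ (⊤ : ℕ∞) (fderiv ℝ (uncurry F)) := hF.fderiv_right hletop'
  have hd : HasFDerivAt (fderiv ℝ (uncurry F)) (fderiv ℝ (fderiv ℝ (uncurry F)) (t, x)) (t, x) :=
    ((h1.differentiable (by simp)) (t, x)).hasFDerivAt
  have hsymm : IsSymmSndFDerivAt ℝ (uncurry F) (t, x) :=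
    hF.contDiffAt.isSymmSndFDerivAt (by simp; exact hle2')
  have e1 : pd1 (pd2 F) t x = fderiv ℝ (fderiv ℝ (uncurry F)) (t, x) (1, 0) (0, 1) := by
    have hg := hd.clm_apply (hasFDerivAt_const ((0:ℝ),(1:ℝ)) ((t,x) : ℝ × ℝ))
    have hgc0 := hg.comp_hasDerivAt t ((hasDerivAt_id t).prodMk (hasDerivAt_const t x))
    have hgc : HasDerivAt (fun s : ℝ => fderiv ℝ (uncurry F) (s, x) ((0:ℝ),(1:ℝ)))
        (fderiv ℝ (fderiv ℝ (uncurry F)) (t, x) (1, 0) (0, 1)) t := by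
      convert hgc0 using 1 <;> (try rfl) <;> simp
    have : (fun s => pd2 F s x) = fun s => fderiv ℝ (uncurry F) (s, x) ((0:ℝ),(1:ℝ)) := by
      funext s; exact pd2_eq_fderiv hF s x
    rw [show pd1 (pd2 F) t x = deriv (fun s => pd2 F s x) t from rfl, this, hgc.deriv]
  have e2 : pd2 (pd1 F) t x = fderiv ℝ (fderiv ℝ (uncurry F)) (t, x) (0, 1) (1, 0) := by
    have hg := hd.clm_apply (hasFDerivAt_const ((1:ℝ),(0:ℝ)) ((t,x) : ℝ × ℝ))
    have hgc0 := hg.comp_hasDerivAt x ((hasDerivAt_const x t).prodMk (hasDerivAt_id x))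
    have hgc : HasDerivAt (fun y : ℝ => fderiv ℝ (uncurry F) (t, y) ((1:ℝ),(0:ℝ)))
        (fderiv ℝ (fderiv ℝ (uncurry F)) (t, x) (0, 1) (1, 0)) x := by
      convert hgc0 using 1 <;> (try rfl) <;> simp
    have : (fun y => pd1 F t y) = fun y => fderiv ℝ (uncurry F) (t, y) ((1:ℝ),(0:ℝ)) := by
      funext y; exact pd1_eq_fderiv hF t y
    rw [show pd2 (pd1 F) t x = deriv (fun y => pd1 F t y) x from rfl, this, hgc.deriv]
  rw [e1, e2, hsymm (1,0) (0,1)]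

lemma per_pd2 (hper : ∀ t x, F t (x + 1) = F t x) (t x : ℝ) :
    pd2 F t (x + 1) = pd2 F t x := by
  have h : (fun y => F t (y + 1)) = F t := funext fun y => hper t y
  show deriv (F t) (x + 1) = deriv (F t) x
  rw [← deriv_comp_add_const (F t) 1 x, h]

lemma per_pd1 (hper : ∀ t x, F t (x + 1) = F t x) (t x : ℝ) :
    pd1 F t (x + 1) = pd1 F t x := by
  show deriv (fun s => F s (x + 1)) t = deriv (fun s => F s x) t
  congr 1
  funext s; exact hper s x

lemma cont_right (hF : ContDiff ℝ (⊤ : ℕ∞) (uncurry F)) (t : ℝ) :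
    Continuous (F t) := (cd_right hF t).continuous

/-- Differentiation under the integral sign. -/
lemma DUI (hF : ContDiff ℝ (⊤ : ℕ∞) (uncurry F)) (t : ℝ) :
    HasDerivAt (fun s => ∫ y in (0:ℝ)..1, F s y) (∫ y in (0:ℝ)..1, pd1 F t y) t := by
  obtain ⟨C, hC⟩ : ∃ C, ∀ p ∈ Icc (t - 1) (t + 1) ×ˢ Icc (0:ℝ) 1, ‖uncurry (pd1 F) p‖ ≤ C :=
    (isCompact_Icc.prod isCompact_Icc).exists_bound_of_continuousOn
      ((cd_pd1 hF).continuous.continuousOn)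
  have h := intervalIntegral.hasDerivAt_integral_of_dominated_loc_of_deriv_le
    (F := fun s y => F s y) (F' := fun s y => pd1 F s y) (x₀ := t) (a := (0:ℝ)) (b := 1)
    (bound := fun _ => C) (s := Metric.ball t 1) (Metric.ball_mem_nhds t one_pos)
    (Eventually.of_forall fun s => ((cont_right hF s).aestronglyMeasurable).restrict)
    ((cont_right hF t).intervalIntegrable 0 1)
    (((cd_right (cd_pd1 hF) t).continuous.aestronglyMeasurable).restrict)
    ?_ ((intervalIntegrable_const : IntervalIntegrable (fun _ => C) MeasureTheory.volume 0 1)) ?_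
  · exact h.2
  · refine Eventually.of_forall fun y hy s hs => ?_
    have hyI : y ∈ Icc (0:ℝ) 1 := by
      have : y ∈ Set.Ioc (0:ℝ) 1 := by
        rwa [Set.uIoc_of_le (by norm_num : (0:ℝ) ≤ 1)] at hy
      exact ⟨le_of_lt this.1, this.2⟩
    have hsI : s ∈ Icc (t - 1) (t + 1) := by
      have := Metric.mem_ball.mp hs
      rw [Real.dist_eq] at this
      constructor <;> [linarith [neg_abs_le (s - t)]; linarith [le_abs_self (s - t)]]
    exact hC (s, y) ⟨hsI, hyI⟩
  · exact Eventually.of_forall fun y _ s _ => hasDerivAt_pd1 hF s y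

/-- Integral of the derivative of a periodic function over a period vanishes. -/
lemma FTC_zero {g g' : ℝ → ℝ} (hd : ∀ x, HasDerivAt g (g' x) x) (hc : Continuous g')
    (hper : g 1 = g 0) : ∫ y in (0:ℝ)..1, g' y = 0 := by
  rw [intervalIntegral.integral_eq_sub_of_hasDerivAt (fun x _ => hd x)
    (hc.intervalIntegrable 0 1), hper, sub_self]

/-- A real function with vanishing derivative on `[0,∞)` is constant there. -/
lemma const_of_deriv_zero {g : ℝ → ℝ} {g' : ℝ → ℝ} (hd : ∀ s, HasDerivAt g (g' s) s)
    (hz : ∀ s, 0 ≤ s → g' s = 0) {t : ℝ} (ht : 0 ≤ t) : g t = g 0 := by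
  have := constant_of_has_deriv_right_zero (f := g) (a := 0) (b := t)
    (fun x _ => (hd x).continuousAt.continuousWithinAt)
    (fun x hx => by
      have h0 : HasDerivAt g 0 x := by
        have := hd x; rwa [hz x hx.1] at this
      exact h0.hasDerivWithinAt)
  exact this t ⟨ht, le_rfl⟩

/-- Cauchy–Schwarz for interval integrals of continuous functions. -/
lemma CS {a b : ℝ} (hab : a ≤ b) {g h : ℝ → ℝ} (hg : Continuous g) (hh : Continuous h) :
    |∫ y in a..b, g y * h y| ≤
      Real.sqrt (∫ y in a..b, (g y) ^ 2) * Real.sqrt (∫ y in a..b, (h y) ^ 2) := by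
  set A := ∫ y in a..b, (g y) ^ 2 with hA
  set B := ∫ y in a..b, g y * h y with hB
  set C := ∫ y in a..b, (h y) ^ 2 with hC
  have hA0 : 0 ≤ A := intervalIntegral.integral_nonneg hab (fun y _ => sq_nonneg _)
  have hC0 : 0 ≤ C := intervalIntegral.integral_nonneg hab (fun y _ => sq_nonneg _)
  have key : B ^ 2 ≤ A * C := by
    have hq : ∀ lam : ℝ, 0 ≤ A * (lam * lam) + (2 * B) * lam + C := by
      intro lam
      have h1 : ∀ y, 0 ≤ (lam * g y + h y) ^ 2 := fun y => sq_nonneg _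
      have h2 : (∫ y in a..b, (lam * g y + h y) ^ 2)
          = A * (lam * lam) + (2 * B) * lam + C := by
        rw [hA, hB, hC]
        have e : ∀ y, (lam * g y + h y) ^ 2
            = (lam * lam) * (g y) ^ 2 + (2 * lam) * (g y * h y) + (h y) ^ 2 := by
          intro y; ring
        rw [intervalIntegral.integral_congr (fun y _ => e y)]
        rw [intervalIntegral.integral_add (by exact ((continuous_const.mul (hg.pow 2)).add
              (continuous_const.mul (hg.mul hh))).intervalIntegrable a b)
            (by exact (hh.pow 2).intervalIntegrable a b),
          intervalIntegral.integral_add (by exact (continuous_const.mul (hg.pow 2)).intervalIntegrable a b)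
            (by exact (continuous_const.mul (hg.mul hh)).intervalIntegrable a b),
          intervalIntegral.integral_const_mul, intervalIntegral.integral_const_mul]
        ring
      have hnn : 0 ≤ ∫ y in a..b, (lam * g y + h y) ^ 2 :=
        intervalIntegral.integral_nonneg hab (fun y _ => h1 y)
      rw [h2] at hnn
      linarith
    have hdisc := discrim_le_zero hq
    rw [discrim] at hdisc
    nlinarith
  calc |B| = Real.sqrt (B ^ 2) := (Real.sqrt_sq_eq_abs B).symm
    _ ≤ Real.sqrt (A * C) := Real.sqrt_le_sqrt key
    _ = Real.sqrt A * Real.sqrt C := Real.sqrt_mul hA0 C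

lemma sqrt_one_twelfth : Real.sqrt (1/12) = Real.sqrt 3 / 6 := by
  have h6 : Real.sqrt 36 = 6 := by
    rw [show (36:ℝ) = 6^2 by norm_num]
    exact Real.sqrt_sq (by norm_num)
  rw [show (1/12:ℝ) = 3/36 by norm_num, Real.sqrt_div (by norm_num : (0:ℝ) ≤ 3), h6]

lemma sum_sqrt_le {A₁ A₂ B₁ B₂ : ℝ} (hA₁ : 0 ≤ A₁) (hA₂ : 0 ≤ A₂) (hB₁ : 0 ≤ B₁)
    (hB₂ : 0 ≤ B₂) : Real.sqrt A₁ * Real.sqrt B₁ + Real.sqrt A₂ * Real.sqrt B₂ ≤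
      Real.sqrt (A₁ + A₂) * Real.sqrt (B₁ + B₂) := by
  have key : (Real.sqrt A₁ * Real.sqrt B₁ + Real.sqrt A₂ * Real.sqrt B₂) ^ 2
      ≤ (A₁ + A₂) * (B₁ + B₂) := by
    nlinarith [sq_nonneg (Real.sqrt A₁ * Real.sqrt B₂ - Real.sqrt A₂ * Real.sqrt B₁),
      Real.sq_sqrt hA₁, Real.sq_sqrt hA₂, Real.sq_sqrt hB₁, Real.sq_sqrt hB₂,
      Real.sqrt_nonneg A₁, Real.sqrt_nonneg A₂, Real.sqrt_nonneg B₁, Real.sqrt_nonneg B₂,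
      mul_nonneg (Real.sqrt_nonneg A₁) (Real.sqrt_nonneg B₁),
      mul_nonneg (Real.sqrt_nonneg A₂) (Real.sqrt_nonneg B₂)]
  have hnn : 0 ≤ Real.sqrt A₁ * Real.sqrt B₁ + Real.sqrt A₂ * Real.sqrt B₂ := by positivity
  calc Real.sqrt A₁ * Real.sqrt B₁ + Real.sqrt A₂ * Real.sqrt B₂
      = Real.sqrt ((Real.sqrt A₁ * Real.sqrt B₁ + Real.sqrt A₂ * Real.sqrt B₂) ^ 2) :=
        (Real.sqrt_sq hnn).symm
    _ ≤ Real.sqrt ((A₁ + A₂) * (B₁ + B₂)) := Real.sqrt_le_sqrt key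
    _ = Real.sqrt (A₁ + A₂) * Real.sqrt (B₁ + B₂) := Real.sqrt_mul (by linarith) _

lemma poincare_core {f : ℝ → ℝ} (hf : ContDiff ℝ (⊤:ℕ∞) f) (hper : ∀ x, f (x+1) = f x)
    {x : ℝ} (hx0 : 0 ≤ x) (hx1 : x ≤ 1) :
    |f x - ∫ y in (0:ℝ)..1, f y| ≤
      Real.sqrt 3 / 6 * Real.sqrt (∫ y in (0:ℝ)..1, (deriv f y)^2) := by
  have hd : ∀ y : ℝ, HasDerivAt f (deriv f y) y :=
    fun y => ((hf.differentiable (by simp)) y).hasDerivAt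
  have hfc : Continuous f := hf.continuous
  have hdc : Continuous (deriv f) := hf.continuous_deriv hle1'
  set c : ℝ := x - 1/2 with hc
  have hf10 : f 1 = f 0 := by simpa using hper 0
  have ibp1 : ∫ y in (0:ℝ)..x, (y - c) * deriv f y
      = (x - c) * f x - (0 - c) * f 0 - ∫ y in (0:ℝ)..x, 1 * f y := by
    apply intervalIntegral.integral_mul_deriv_eq_deriv_mul
      (fun y _ => (hasDerivAt_id y).sub_const c) (fun y _ => hd y)
      ((continuous_const.intervalIntegrable 0 x)) (hdc.intervalIntegrable 0 x)
  have ibp2 : ∫ y in x..(1:ℝ), (y - c - 1) * deriv f y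
      = (1 - c - 1) * f 1 - (x - c - 1) * f x - ∫ y in x..(1:ℝ), 1 * f y := by
    apply intervalIntegral.integral_mul_deriv_eq_deriv_mul
      (fun y _ => ((hasDerivAt_id y).sub_const c).sub_const 1) (fun y _ => hd y)
      ((continuous_const.intervalIntegrable x 1)) (hdc.intervalIntegrable x 1)
  have hadj : (∫ y in (0:ℝ)..x, 1 * f y) + ∫ y in x..(1:ℝ), 1 * f y
      = ∫ y in (0:ℝ)..1, 1 * f y :=
    intervalIntegral.integral_add_adjacent_intervals
      ((continuous_const.mul hfc).intervalIntegrable 0 x)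
      ((continuous_const.mul hfc).intervalIntegrable x 1)
  have hint1 : (∫ y in (0:ℝ)..1, 1 * f y) = ∫ y in (0:ℝ)..1, f y := by
    simp
  have hrepr : f x - (∫ y in (0:ℝ)..1, f y)
      = (∫ y in (0:ℝ)..x, (y - c) * deriv f y) + ∫ y in x..(1:ℝ), (y - c - 1) * deriv f y := by
    have hJ := hadj.trans hint1
    rw [ibp1, ibp2, hf10]
    linear_combination hJ
  have hA1 : ∫ y in (0:ℝ)..x, (y - c)^2 = ((x - c)^3 - (0 - c)^3) / 3 := by
    have : ∀ y ∈ Set.uIcc (0:ℝ) x, HasDerivAt (fun y => (y - c)^3/3) ((y - c)^2) y := by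
      intro y _
      have h := (((hasDerivAt_id y).sub_const c).pow 3).div_const 3
      convert h using 1 <;> try rfl
      push_cast
      try simp only [id_eq]
      ring
    rw [intervalIntegral.integral_eq_sub_of_hasDerivAt this
      (((continuous_id.sub continuous_const).pow 2).intervalIntegrable 0 x)]
    ring
  have hA2 : ∫ y in x..(1:ℝ), (y - c - 1)^2 = ((1 - c - 1)^3 - (x - c - 1)^3) / 3 := by
    have : ∀ y ∈ Set.uIcc x (1:ℝ), HasDerivAt (fun y => (y - c - 1)^3/3) ((y - c - 1)^2) y := by
      intro y _
      have h := ((((hasDerivAt_id y).sub_const c).sub_const 1).pow 3).div_const 3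
      convert h using 1 <;> try rfl
      push_cast
      try simp only [id_eq]
      ring
    rw [intervalIntegral.integral_eq_sub_of_hasDerivAt this
      ((((continuous_id.sub continuous_const).sub continuous_const).pow 2).intervalIntegrable x 1)]
    ring
  have hB : (∫ y in (0:ℝ)..x, (deriv f y)^2) + ∫ y in x..(1:ℝ), (deriv f y)^2
      = ∫ y in (0:ℝ)..1, (deriv f y)^2 :=
    intervalIntegral.integral_add_adjacent_intervals
      ((hdc.pow 2).intervalIntegrable 0 x) ((hdc.pow 2).intervalIntegrable x 1)
  have hB1 : 0 ≤ ∫ y in (0:ℝ)..x, (deriv f y)^2 :=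
    intervalIntegral.integral_nonneg hx0 (fun y _ => sq_nonneg _)
  have hB2 : 0 ≤ ∫ y in x..(1:ℝ), (deriv f y)^2 :=
    intervalIntegral.integral_nonneg hx1 (fun y _ => sq_nonneg _)
  have hA1nn : 0 ≤ ∫ y in (0:ℝ)..x, (y - c)^2 :=
    intervalIntegral.integral_nonneg hx0 (fun y _ => sq_nonneg _)
  have hA2nn : 0 ≤ ∫ y in x..(1:ℝ), (y - c - 1)^2 :=
    intervalIntegral.integral_nonneg hx1 (fun y _ => sq_nonneg _)
  have hcs1 := CS hx0 (continuous_id.sub (continuous_const (y := c))) hdc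
  have hcs2 := CS hx1 ((continuous_id.sub (continuous_const (y := c))).sub
    (continuous_const (y := (1:ℝ)))) hdc
  have hAsum : (∫ y in (0:ℝ)..x, (y - c)^2) + ∫ y in x..(1:ℝ), (y - c - 1)^2 = 1/12 := by
    rw [hA1, hA2, hc]; ring
  calc |f x - ∫ y in (0:ℝ)..1, f y|
      ≤ |∫ y in (0:ℝ)..x, (y - c) * deriv f y| + |∫ y in x..(1:ℝ), (y - c - 1) * deriv f y| := by
        rw [hrepr]; exact abs_add_le _ _
    _ ≤ Real.sqrt (∫ y in (0:ℝ)..x, (y - c)^2) * Real.sqrt (∫ y in (0:ℝ)..x, (deriv f y)^2)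
        + Real.sqrt (∫ y in x..(1:ℝ), (y - c - 1)^2) *
          Real.sqrt (∫ y in x..(1:ℝ), (deriv f y)^2) := add_le_add hcs1 hcs2
    _ ≤ Real.sqrt ((∫ y in (0:ℝ)..x, (y - c)^2) + ∫ y in x..(1:ℝ), (y - c - 1)^2)
        * Real.sqrt ((∫ y in (0:ℝ)..x, (deriv f y)^2) + ∫ y in x..(1:ℝ), (deriv f y)^2) :=
        sum_sqrt_le hA1nn hA2nn hB1 hB2
    _ = Real.sqrt 3 / 6 * Real.sqrt (∫ y in (0:ℝ)..1, (deriv f y)^2) := by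
        rw [hAsum, hB, sqrt_one_twelfth]

lemma poincare {f : ℝ → ℝ} (hf : ContDiff ℝ (⊤:ℕ∞) f) (hper : ∀ x, f (x+1) = f x) (x : ℝ) :
    |f x - ∫ y in (0:ℝ)..1, f y| ≤
      Real.sqrt 3 / 6 * Real.sqrt (∫ y in (0:ℝ)..1, (deriv f y)^2) := by
  have hpf : Function.Periodic f 1 := hper
  have hfr : f (Int.fract x) = f x := by
    have := hpf.sub_int_mul_eq (x := x) ⌊x⌋
    rw [Int.fract]
    simpa using this
  rw [← hfr]
  exact poincare_core hf hper (Int.fract_nonneg x) (le_of_lt (Int.fract_lt_one x))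

lemma periodic_eval {h : ℝ → ℝ → ℝ} (hp : ∀ a b, h a (b + 1) = h a b) (t : ℝ) :
    h t 1 = h t 0 := by simpa using hp t 0

end Aux

theorem stmt_3
    (γ : ℝ) (u ρ : ℝ → ℝ → ℝ) (μ₀ μ₁ : ℝ)
    (hu : ContDiff ℝ (⊤ : ℕ∞) (Function.uncurry u))
    (hρ : ContDiff ℝ (⊤ : ℕ∞) (Function.uncurry ρ))
    (huper : ∀ t x : ℝ, u t (x + 1) = u t x)
    (hρper : ∀ t x : ℝ, ρ t (x + 1) = ρ t x)
    (heq1 : ∀ t x : ℝ, 0 ≤ t →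
      deriv (fun s => ∫ y in (0:ℝ)..1, u s y) t
        - deriv (fun s => deriv (deriv (u s)) x) t
      = 2 * (∫ y in (0:ℝ)..1, u t y) * deriv (u t) x
        - 2 * deriv (u t) x * deriv (deriv (u t)) x
        - u t x * deriv (deriv (deriv (u t))) x
        + ρ t x * deriv (ρ t) x
        - γ * deriv (deriv (deriv (u t))) x)
    (heq2 : ∀ t x : ℝ, 0 ≤ t →
      deriv (fun s => ρ s x) t
      = deriv (fun y => ρ t y * u t y) x + γ * deriv (ρ t) x)
    (hμ₀ : μ₀ = ∫ y in (0:ℝ)..1, u 0 y)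
    (hμ₁ : μ₁ = Real.sqrt (∫ y in (0:ℝ)..1, ((deriv (u 0) y) ^ 2 + (ρ 0 y) ^ 2)))
    : ∀ t x : ℝ, 0 ≤ t → |u t x| ≤ |μ₀| + Real.sqrt 3 / 6 * μ₁ := by
  -- smoothness registry
  have hu2s := cd_pd2 hu
  have hu22s := cd_pd2 hu2s
  have hu222s := cd_pd2 hu22s
  have hu1s := cd_pd1 hu
  have hu21s := cd_pd2 hu1s
  have hu221s := cd_pd2 hu21s
  have hu12s := cd_pd1 hu2s
  have hu122s := cd_pd1 hu22s
  have hu212s := cd_pd2 hu12s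
  have hρ2s := cd_pd2 hρ
  have hρ1s := cd_pd1 hρ
  -- pointwise form of equation 1
  have heqP : ∀ t x : ℝ, 0 ≤ t → (∫ y in (0:ℝ)..1, pd1 u t y) - pd1 (pd2 (pd2 u)) t x
      = 2 * (∫ y in (0:ℝ)..1, u t y) * pd2 u t x - 2 * pd2 u t x * pd2 (pd2 u) t x
        - u t x * pd2 (pd2 (pd2 u)) t x + ρ t x * pd2 ρ t x
        - γ * pd2 (pd2 (pd2 u)) t x := by
    intro t x ht
    have h := heq1 t x ht
    rw [(DUI hu t).deriv] at h
    exact h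
  -- pointwise form of equation 2
  have heqρ : ∀ t y : ℝ, 0 ≤ t → pd1 ρ t y
      = pd2 ρ t y * u t y + ρ t y * pd2 u t y + γ * pd2 ρ t y := by
    intro t y ht
    have h := heq2 t y ht
    have hprod : deriv (fun z => ρ t z * u t z) y
        = pd2 ρ t y * u t y + ρ t y * pd2 u t y :=
      ((hasDerivAt_pd2 hρ t y).mul (hasDerivAt_pd2 hu t y)).deriv
    rw [hprod] at h
    exact h
  -- Clairaut combinations
  have hcl : ∀ t x : ℝ, pd1 (pd2 (pd2 u)) t x = pd2 (pd2 (pd1 u)) t x := by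
    intro t x
    rw [clairaut hu2s t x]
    have hE : pd1 (pd2 u) = pd2 (pd1 u) := funext fun a => funext fun b => clairaut hu a b
    rw [hE]
  -- conservation of the mean
  have meanZero : ∀ t : ℝ, 0 ≤ t → (∫ y in (0:ℝ)..1, pd1 u t y) = 0 := by
    intro t ht
    have hΨd : ∀ x : ℝ, HasDerivAt
        (fun y => pd2 (pd1 u) t y + (2 * (∫ z in (0:ℝ)..1, u t z) * u t y
          - u t y * pd2 (pd2 u) t y - pd2 u t y ^ 2 / 2 + ρ t y ^ 2 / 2
          - γ * pd2 (pd2 u) t y))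
        (pd1 (pd2 (pd2 u)) t x + (2 * (∫ z in (0:ℝ)..1, u t z) * pd2 u t x
          - 2 * pd2 u t x * pd2 (pd2 u) t x - u t x * pd2 (pd2 (pd2 u)) t x
          + ρ t x * pd2 ρ t x - γ * pd2 (pd2 (pd2 u)) t x)) x := by
      intro x
      have h1 := hasDerivAt_pd2 hu21s t x
      have h2 := hasDerivAt_pd2 hu t x
      have h3 := hasDerivAt_pd2 hu2s t x
      have h4 := hasDerivAt_pd2 hu22s t x
      have h5 := hasDerivAt_pd2 hρ t x
      have H := h1.add (((((h2.const_mul (2 * (∫ z in (0:ℝ)..1, u t z))).sub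
        (h2.mul h4)).sub ((h3.pow 2).div_const 2)).add ((h5.pow 2).div_const 2)).sub
        (h4.const_mul γ))
      convert H using 1 <;> try rfl
      rw [hcl t x]
      push_cast
      ring
    have hDcont : Continuous (fun x : ℝ => pd1 (pd2 (pd2 u)) t x
        + (2 * (∫ z in (0:ℝ)..1, u t z) * pd2 u t x
          - 2 * pd2 u t x * pd2 (pd2 u) t x - u t x * pd2 (pd2 (pd2 u)) t x
          + ρ t x * pd2 ρ t x - γ * pd2 (pd2 (pd2 u)) t x)) :=
      (cont_right hu122s t).add (((((continuous_const.mul (cont_right hu2s t)).sub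
        ((continuous_const.mul (cont_right hu2s t)).mul (cont_right hu22s t))).sub
        ((cont_right hu t).mul (cont_right hu222s t))).add
        ((cont_right hρ t).mul (cont_right hρ2s t))).sub
        (continuous_const.mul (cont_right hu222s t)))
    have hΨper : pd2 (pd1 u) t 1 + (2 * (∫ z in (0:ℝ)..1, u t z) * u t 1
          - u t 1 * pd2 (pd2 u) t 1 - pd2 u t 1 ^ 2 / 2 + ρ t 1 ^ 2 / 2
          - γ * pd2 (pd2 u) t 1)
        = pd2 (pd1 u) t 0 + (2 * (∫ z in (0:ℝ)..1, u t z) * u t 0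
          - u t 0 * pd2 (pd2 u) t 0 - pd2 u t 0 ^ 2 / 2 + ρ t 0 ^ 2 / 2
          - γ * pd2 (pd2 u) t 0) := by
      rw [periodic_eval (per_pd2 (per_pd1 huper)) t, periodic_eval huper t,
        periodic_eval (per_pd2 (per_pd2 huper)) t, periodic_eval (per_pd2 huper) t,
        periodic_eval hρper t]
    have h0 : (∫ x in (0:ℝ)..1, (pd1 (pd2 (pd2 u)) t x
        + (2 * (∫ z in (0:ℝ)..1, u t z) * pd2 u t x
          - 2 * pd2 u t x * pd2 (pd2 u) t x - u t x * pd2 (pd2 (pd2 u)) t x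
          + ρ t x * pd2 ρ t x - γ * pd2 (pd2 (pd2 u)) t x))) = 0 :=
      FTC_zero hΨd hDcont hΨper
    have hstep : (∫ y in (0:ℝ)..1, pd1 u t y)
        = ∫ x in (0:ℝ)..1, (pd1 (pd2 (pd2 u)) t x
          + (2 * (∫ z in (0:ℝ)..1, u t z) * pd2 u t x
            - 2 * pd2 u t x * pd2 (pd2 u) t x - u t x * pd2 (pd2 (pd2 u)) t x
            + ρ t x * pd2 ρ t x - γ * pd2 (pd2 (pd2 u)) t x)) := by
      have hcongr : Set.EqOn (fun _ : ℝ => (∫ y in (0:ℝ)..1, pd1 u t y))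
          (fun x : ℝ => pd1 (pd2 (pd2 u)) t x
            + (2 * (∫ z in (0:ℝ)..1, u t z) * pd2 u t x
              - 2 * pd2 u t x * pd2 (pd2 u) t x - u t x * pd2 (pd2 (pd2 u)) t x
              + ρ t x * pd2 ρ t x - γ * pd2 (pd2 (pd2 u)) t x))
          (Set.uIcc (0:ℝ) 1) := by
        intro x _
        have := heqP t x ht
        simp only
        linarith
      have h' : (∫ x in (0:ℝ)..1, (fun _ : ℝ => (∫ y in (0:ℝ)..1, pd1 u t y)) x)
          = ∫ x in (0:ℝ)..1, (pd1 (pd2 (pd2 u)) t x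
            + (2 * (∫ z in (0:ℝ)..1, u t z) * pd2 u t x
              - 2 * pd2 u t x * pd2 (pd2 u) t x - u t x * pd2 (pd2 (pd2 u)) t x
              + ρ t x * pd2 ρ t x - γ * pd2 (pd2 (pd2 u)) t x)) :=
        intervalIntegral.integral_congr hcongr
      simpa using h'
    rw [hstep, h0]
  -- the mean is constant
  have meanConst : ∀ t : ℝ, 0 ≤ t → (∫ y in (0:ℝ)..1, u t y) = μ₀ := by
    intro t ht
    have := const_of_deriv_zero (fun s => DUI hu s) (fun s hs => meanZero s hs) ht
    rw [hμ₀]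
    exact this
  -- smoothness of the energy density
  have hWs : ContDiff ℝ (⊤ : ℕ∞) (Function.uncurry
      (fun s z => pd2 u s z ^ 2 + ρ s z ^ 2)) := (hu2s.pow 2).add (hρ.pow 2)
  -- conservation of energy
  have energyZero : ∀ t : ℝ, 0 ≤ t →
      (∫ y in (0:ℝ)..1, pd1 (fun s z => pd2 u s z ^ 2 + ρ s z ^ 2) t y) = 0 := by
    intro t ht
    have hpt : ∀ y : ℝ, pd1 (fun s z => pd2 u s z ^ 2 + ρ s z ^ 2) t y
        = 2 * pd2 u t y * pd1 (pd2 u) t y + 2 * ρ t y * pd1 ρ t y := by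
      intro y
      have H := ((hasDerivAt_pd1 hu2s t y).pow 2).add ((hasDerivAt_pd1 hρ t y).pow 2)
      have hD : deriv (fun s => pd2 u s y ^ 2 + ρ s y ^ 2) t = _ := H.deriv
      rw [show pd1 (fun s z => pd2 u s z ^ 2 + ρ s z ^ 2) t y
        = deriv (fun s => pd2 u s y ^ 2 + ρ s y ^ 2) t from rfl, hD]
      push_cast
      ring
    have hibp : (∫ y in (0:ℝ)..1, (2 * pd1 (pd2 u) t y) * pd2 u t y)
        = (2 * pd1 (pd2 u) t 1) * u t 1 - (2 * pd1 (pd2 u) t 0) * u t 0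
          - ∫ y in (0:ℝ)..1, (2 * pd2 (pd1 (pd2 u)) t y) * u t y :=
      intervalIntegral.integral_mul_deriv_eq_deriv_mul
        (fun y _ => (hasDerivAt_pd2 hu12s t y).const_mul 2)
        (fun y _ => hasDerivAt_pd2 hu t y)
        ((continuous_const.mul (cont_right hu212s t)).intervalIntegrable 0 1)
        ((cont_right hu2s t).intervalIntegrable 0 1)
    have hb : (2 * pd1 (pd2 u) t 1) * u t 1 = (2 * pd1 (pd2 u) t 0) * u t 0 := by
      rw [periodic_eval (per_pd1 (per_pd2 huper)) t, periodic_eval huper t]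
    have hsplit : (∫ y in (0:ℝ)..1, (2 * pd2 u t y * pd1 (pd2 u) t y
          + 2 * ρ t y * pd1 ρ t y))
        = (∫ y in (0:ℝ)..1, (2 * pd1 (pd2 u) t y) * pd2 u t y)
          + ∫ y in (0:ℝ)..1, 2 * ρ t y * pd1 ρ t y := by
      rw [← intervalIntegral.integral_add
        (by exact ((continuous_const.mul (cont_right hu12s t)).mul (cont_right hu2s t)).intervalIntegrable 0 1)
        (by exact ((continuous_const.mul (cont_right hρ t)).mul (cont_right hρ1s t)).intervalIntegrable 0 1)]
      apply intervalIntegral.integral_congr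
      intro y _
      simp only
      ring
    have hcomb : (∫ y in (0:ℝ)..1, pd1 (fun s z => pd2 u s z ^ 2 + ρ s z ^ 2) t y)
        = ∫ y in (0:ℝ)..1, (2 * ρ t y * pd1 ρ t y
            - (2 * pd2 (pd1 (pd2 u)) t y) * u t y) := by
      have hI1 : IntervalIntegrable (fun y => 2 * ρ t y * pd1 ρ t y)
          MeasureTheory.volume 0 1 := by
        apply Continuous.intervalIntegrable
        exact (continuous_const.mul (cont_right hρ t)).mul (cont_right hρ1s t)
      have hI2 : IntervalIntegrable (fun y => (2 * pd2 (pd1 (pd2 u)) t y) * u t y)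
          MeasureTheory.volume 0 1 := by
        apply Continuous.intervalIntegrable
        exact (continuous_const.mul (cont_right hu212s t)).mul (cont_right hu t)
      have hsub := intervalIntegral.integral_sub hI1 hI2
      rw [intervalIntegral.integral_congr (fun y (_ : y ∈ Set.uIcc (0:ℝ) 1) => hpt y), hsplit,
        hibp, hb, hsub]
      ring
    -- rewrite the integrand using the equations and Clairaut
    have hptw2 : ∀ y : ℝ, 2 * ρ t y * pd1 ρ t y - (2 * pd2 (pd1 (pd2 u)) t y) * u t y
        = 4 * (∫ z in (0:ℝ)..1, u t z) * u t y * pd2 u t y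
          - 4 * (u t y * pd2 u t y * pd2 (pd2 u) t y)
          - 2 * (u t y ^ 2 * pd2 (pd2 (pd2 u)) t y)
          + 2 * (pd2 u t y * ρ t y ^ 2)
          + 4 * (u t y * ρ t y * pd2 ρ t y)
          - 2 * γ * (u t y * pd2 (pd2 (pd2 u)) t y)
          + 2 * γ * (ρ t y * pd2 ρ t y) := by
      intro y
      have hcl2 : pd2 (pd1 (pd2 u)) t y = pd1 (pd2 (pd2 u)) t y := (clairaut hu2s t y).symm
      have hq : pd1 (pd2 (pd2 u)) t y
          = -(2 * (∫ z in (0:ℝ)..1, u t z) * pd2 u t y - 2 * pd2 u t y * pd2 (pd2 u) t y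
            - u t y * pd2 (pd2 (pd2 u)) t y + ρ t y * pd2 ρ t y
            - γ * pd2 (pd2 (pd2 u)) t y) := by
        have h1 := heqP t y ht
        have h2 := meanZero t ht
        rw [h2] at h1
        linarith
      rw [hcl2, hq, heqρ t y ht]
      ring
    rw [hcomb, intervalIntegral.integral_congr (fun y (_ : y ∈ Set.uIcc (0:ℝ) 1) => hptw2 y)]
    -- final FTC step with the explicit antiderivative
    have hΦd : ∀ y : ℝ, HasDerivAt
        (fun y => 2 * (∫ z in (0:ℝ)..1, u t z) * u t y ^ 2
          - 2 * (u t y ^ 2 * pd2 (pd2 u) t y) + 2 * (u t y * ρ t y ^ 2)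
          - 2 * γ * (u t y * pd2 (pd2 u) t y) + γ * pd2 u t y ^ 2 + γ * ρ t y ^ 2)
        (4 * (∫ z in (0:ℝ)..1, u t z) * u t y * pd2 u t y
          - 4 * (u t y * pd2 u t y * pd2 (pd2 u) t y)
          - 2 * (u t y ^ 2 * pd2 (pd2 (pd2 u)) t y)
          + 2 * (pd2 u t y * ρ t y ^ 2)
          + 4 * (u t y * ρ t y * pd2 ρ t y)
          - 2 * γ * (u t y * pd2 (pd2 (pd2 u)) t y)
          + 2 * γ * (ρ t y * pd2 ρ t y)) y := by
      intro y
      have h2 := hasDerivAt_pd2 hu t y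
      have h3 := hasDerivAt_pd2 hu2s t y
      have h4 := hasDerivAt_pd2 hu22s t y
      have h5 := hasDerivAt_pd2 hρ t y
      have H := ((((((h2.pow 2).const_mul (2 * (∫ z in (0:ℝ)..1, u t z))).sub
        (((h2.pow 2).mul h4).const_mul 2)).add ((h2.mul (h5.pow 2)).const_mul 2)).sub
        ((h2.mul h4).const_mul (2 * γ))).add ((h3.pow 2).const_mul γ)).add
        ((h5.pow 2).const_mul γ)
      convert H using 1 <;> try rfl
      push_cast
      try simp only [Pi.pow_apply]
      ring
    have hΦcont : Continuous (fun y : ℝ =>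
        4 * (∫ z in (0:ℝ)..1, u t z) * u t y * pd2 u t y
          - 4 * (u t y * pd2 u t y * pd2 (pd2 u) t y)
          - 2 * (u t y ^ 2 * pd2 (pd2 (pd2 u)) t y)
          + 2 * (pd2 u t y * ρ t y ^ 2)
          + 4 * (u t y * ρ t y * pd2 ρ t y)
          - 2 * γ * (u t y * pd2 (pd2 (pd2 u)) t y)
          + 2 * γ * (ρ t y * pd2 ρ t y)) :=
      (((((((continuous_const.mul (cont_right hu t)).mul (cont_right hu2s t)).sub
        (continuous_const.mul (((cont_right hu t).mul (cont_right hu2s t)).mul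
          (cont_right hu22s t)))).sub
        (continuous_const.mul (((cont_right hu t).pow 2).mul (cont_right hu222s t)))).add
        (continuous_const.mul ((cont_right hu2s t).mul ((cont_right hρ t).pow 2)))).add
        (continuous_const.mul (((cont_right hu t).mul (cont_right hρ t)).mul
          (cont_right hρ2s t)))).sub
        (continuous_const.mul ((cont_right hu t).mul (cont_right hu222s t)))).add
        (continuous_const.mul ((cont_right hρ t).mul (cont_right hρ2s t)))
    have hΦper : 2 * (∫ z in (0:ℝ)..1, u t z) * u t 1 ^ 2
          - 2 * (u t 1 ^ 2 * pd2 (pd2 u) t 1) + 2 * (u t 1 * ρ t 1 ^ 2)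
          - 2 * γ * (u t 1 * pd2 (pd2 u) t 1) + γ * pd2 u t 1 ^ 2 + γ * ρ t 1 ^ 2
        = 2 * (∫ z in (0:ℝ)..1, u t z) * u t 0 ^ 2
          - 2 * (u t 0 ^ 2 * pd2 (pd2 u) t 0) + 2 * (u t 0 * ρ t 0 ^ 2)
          - 2 * γ * (u t 0 * pd2 (pd2 u) t 0) + γ * pd2 u t 0 ^ 2 + γ * ρ t 0 ^ 2 := by
      rw [periodic_eval huper t, periodic_eval (per_pd2 (per_pd2 huper)) t,
        periodic_eval hρper t, periodic_eval (per_pd2 huper) t]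
    exact FTC_zero hΦd hΦcont hΦper
  -- energy is constant
  have energyConst : ∀ t : ℝ, 0 ≤ t →
      (∫ y in (0:ℝ)..1, (pd2 u t y ^ 2 + ρ t y ^ 2))
        = ∫ y in (0:ℝ)..1, (pd2 u 0 y ^ 2 + ρ 0 y ^ 2) := by
    intro t ht
    exact const_of_deriv_zero (fun s => DUI hWs s) (fun s hs => energyZero s hs) ht
  -- final assembly
  intro t x ht
  have hMeanT := meanConst t ht
  have hET := energyConst t ht
  have hE0 : μ₁ = Real.sqrt (∫ y in (0:ℝ)..1, (pd2 u 0 y ^ 2 + ρ 0 y ^ 2)) := hμ₁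
  have hud : (∫ y in (0:ℝ)..1, (deriv (u t) y) ^ 2)
      ≤ ∫ y in (0:ℝ)..1, (pd2 u t y ^ 2 + ρ t y ^ 2) := by
    apply intervalIntegral.integral_mono_on (by norm_num : (0:ℝ) ≤ 1)
      (((cont_right hu2s t).pow 2).intervalIntegrable 0 1)
      ((((cont_right hu2s t).pow 2).add ((cont_right hρ t).pow 2)).intervalIntegrable 0 1)
    intro y _
    show pd2 u t y ^ 2 ≤ pd2 u t y ^ 2 + ρ t y ^ 2
    exact le_add_of_nonneg_right (sq_nonneg _)
  have hsq : Real.sqrt (∫ y in (0:ℝ)..1, (deriv (u t) y) ^ 2) ≤ μ₁ := by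
    calc Real.sqrt (∫ y in (0:ℝ)..1, (deriv (u t) y) ^ 2)
        ≤ Real.sqrt (∫ y in (0:ℝ)..1, (pd2 u t y ^ 2 + ρ t y ^ 2)) := Real.sqrt_le_sqrt hud
      _ = Real.sqrt (∫ y in (0:ℝ)..1, (pd2 u 0 y ^ 2 + ρ 0 y ^ 2)) := by rw [hET]
      _ = μ₁ := hE0.symm
  have hp := poincare (cd_right hu t) (fun y => huper t y) x
  have htri : |u t x| ≤ |u t x - ∫ y in (0:ℝ)..1, u t y| + |∫ y in (0:ℝ)..1, u t y| := by
    have : u t x = (u t x - ∫ y in (0:ℝ)..1, u t y) + ∫ y in (0:ℝ)..1, u t y := by ring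
    rw [this]
    exact (abs_add_le _ _).trans (by rw [← this])
  calc |u t x| ≤ |u t x - ∫ y in (0:ℝ)..1, u t y| + |∫ y in (0:ℝ)..1, u t y| := htri
    _ ≤ Real.sqrt 3 / 6 * Real.sqrt (∫ y in (0:ℝ)..1, (deriv (u t) y) ^ 2) + |μ₀| := by
        refine add_le_add hp ?_
        rw [hMeanT]
    _ ≤ Real.sqrt 3 / 6 * μ₁ + |μ₀| := by
        refine add_le_add_left (mul_le_mul_of_nonneg_left hsq (by positivity)) _
    _ = |μ₀| + Real.sqrt 3 / 6 * μ₁ := by ring
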